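/- arXiv:2211.06092 — 3 statements merged into one kernel-verified Lean document; each statement's English description precedes it below -/
import Mathlib

section
/- If a sequence H : ℕ → ℕ satisfies the recurrence H(n) = H(n - H(n-2)) + H(n - H(n-3)) for all sufficiently large n, all arguments appearing in the recursion are positive, and the limit of H(n)/n as n → ∞ exists and equals some real number L with 0 < L < 1, then L = 1/2. -/
open Filter

private lemma nat_sub_div_tendsto_one (k : ℕ) :
    Tendsto (fun n : ℕ => ((n - k : ℕ) : ℝ) / n) atTop (nhds 1) := by
  have h : Tendsto (fun n : ℕ => 1 - (k : ℝ) / n) atTop (nhds 1) := by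
    have h0 := tendsto_const_div_atTop_nhds_zero_nat (k : ℝ)
    simpa using (tendsto_const_nhds.sub h0)
  refine h.congr' ?_
  filter_upwards [eventually_ge_atTop k, eventually_gt_atTop 0] with n hn hn0
  have hne : (n : ℝ) ≠ 0 := by positivity
  rw [Nat.cast_sub hn, sub_div, div_self hne]

private lemma Hshift (H : ℕ → ℕ) (L : ℝ)
    (hlim : Tendsto (fun n : ℕ => (H n : ℝ) / n) atTop (nhds L)) (k : ℕ) :
    Tendsto (fun n : ℕ => (H (n - k) : ℝ) / n) atTop (nhds L) := by
  have h1 : Tendsto (fun n : ℕ => (H (n - k) : ℝ) / ((n - k : ℕ) : ℝ)) atTop (nhds L) :=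
    hlim.comp (tendsto_sub_atTop_nat k)
  have h2 := h1.mul (nat_sub_div_tendsto_one k)
  rw [mul_one] at h2
  refine h2.congr' ?_
  filter_upwards [eventually_gt_atTop k] with n hn
  have hnk : ((n - k : ℕ) : ℝ) ≠ 0 := by
    exact_mod_cast (Nat.sub_pos_of_lt hn).ne'
  have hne : (n : ℝ) ≠ 0 := by
    have : 0 < n := lt_of_le_of_lt (Nat.zero_le k) hn
    positivity
  field_simp

private lemma comp_lemma (H g : ℕ → ℕ) (L : ℝ)
    (hlim : Tendsto (fun n : ℕ => (H n : ℝ) / n) atTop (nhds L))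
    (hg : ∀ᶠ n in atTop, g n ≤ n)
    (hgl : Tendsto (fun n : ℕ => (g n : ℝ) / n) atTop (nhds L))
    (hL1 : L < 1) :
    Tendsto (fun n : ℕ => (H (n - g n) : ℝ) / n) atTop (nhds (L * (1 - L))) := by
  set d : ℕ → ℕ := fun n => n - g n with hd_def
  have hd : Tendsto (fun n : ℕ => ((d n : ℕ) : ℝ) / n) atTop (nhds (1 - L)) := by
    have h := (tendsto_const_nhds (x := (1:ℝ)) (f := atTop (α := ℕ))).sub hgl
    refine (h.congr' ?_ : _)
    filter_upwards [hg, eventually_gt_atTop 0] with n h1 h2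
    have hne : (n : ℝ) ≠ 0 := by positivity
    simp only [hd_def, Nat.cast_sub h1, sub_div, div_self hne]
  have hdtop : Tendsto d atTop atTop := by
    rw [← tendsto_natCast_atTop_iff (R := ℝ)]
    have hmul : Tendsto (fun n : ℕ => (n : ℝ) * (((d n : ℕ) : ℝ) / n)) atTop atTop :=
      Filter.Tendsto.atTop_mul_pos (by linarith : (0:ℝ) < 1 - L) tendsto_natCast_atTop_atTop hd
    refine hmul.congr' ?_
    filter_upwards [eventually_gt_atTop 0] with n hn
    have hne : (n : ℝ) ≠ 0 := by positivity
    field_simp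
  have hHd : Tendsto (fun n : ℕ => (H (d n) : ℝ) / (d n : ℝ)) atTop (nhds L) :=
    hlim.comp hdtop
  have hprod := hHd.mul hd
  refine hprod.congr' ?_
  filter_upwards [hdtop.eventually (eventually_gt_atTop 0), eventually_gt_atTop 0]
    with n hdn hn
  have h1 : ((d n : ℕ) : ℝ) ≠ 0 := by exact_mod_cast hdn.ne'
  have h2 : (n : ℝ) ≠ 0 := by positivity
  field_simp
  rfl

/-- If H satisfies H(n)=H(n-H(n-2))+H(n-H(n-3)) eventually, the recursion arguments stay
positive, and H(n)/n → L with 0 < L < 1, then L = 1/2. -/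
theorem H_limit_is_half (H : ℕ → ℕ) (N : ℕ) (L : ℝ)
    (hrec : ∀ n, N ≤ n → H n = H (n - H (n - 2)) + H (n - H (n - 3)))
    (hargs : ∀ n, N ≤ n →
      (1 ≤ H (n - 2) ∧ H (n - 2) ≤ n - 1) ∧ (1 ≤ H (n - 3) ∧ H (n - 3) ≤ n - 1))
    (hlim : Tendsto (fun n : ℕ => (H n : ℝ) / n) atTop (nhds L))
    (hL0 : 0 < L) (hL1 : L < 1) :
    L = 1 / 2 := by
  have hg2 : ∀ᶠ n in atTop, H (n - 2) ≤ n := by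
    filter_upwards [eventually_ge_atTop N] with n hn
    exact le_trans ((hargs n hn).1.2) (Nat.sub_le n 1)
  have hg3 : ∀ᶠ n in atTop, H (n - 3) ≤ n := by
    filter_upwards [eventually_ge_atTop N] with n hn
    exact le_trans ((hargs n hn).2.2) (Nat.sub_le n 1)
  have h2 := comp_lemma H (fun n => H (n - 2)) L hlim hg2 (Hshift H L hlim 2) hL1
  have h3 := comp_lemma H (fun n => H (n - 3)) L hlim hg3 (Hshift H L hlim 3) hL1
  have hsum := h2.add h3
  have heq : L = L * (1 - L) + L * (1 - L) := by
    refine tendsto_nhds_unique hlim ?_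
    refine hsum.congr' ?_
    filter_upwards [eventually_ge_atTop N, eventually_gt_atTop 0] with n hn hn0
    rw [hrec n hn]
    push_cast
    rw [add_div]
  have hz : L * (2 * L - 1) = 0 := by linear_combination heq
  rcases mul_eq_zero.mp hz with h | h
  · exact absurd h hL0.ne'
  · linarith
end

section
/- If a sequence Q : ℕ → ℕ satisfies Q(n) = Σ_{i=1}^{ℓ} Q(n − Q(n−i)) for all large n (with ℓ ≥ 2 fixed and all arguments positive), and Q(n)/n converges to a limit L ∈ (0,1), then L = (ℓ−1)/ℓ. -/
open Filter Finset

/-- If Q satisfies Q(n) = Σ_{i=1}^ℓ Q(n - Q(n-i)) eventually, with positive arguments,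
and Q(n)/n → L ∈ (0,1), then L = (ℓ-1)/ℓ. -/
theorem Q_sum_limit (ℓ : ℕ) (hℓ : 2 ≤ ℓ) (Q : ℕ → ℕ) (N : ℕ) (L : ℝ)
    (hrec : ∀ n, N ≤ n → Q n = ∑ i ∈ Finset.Icc 1 ℓ, Q (n - Q (n - i)))
    (hargs : ∀ n, N ≤ n → ∀ i ∈ Finset.Icc 1 ℓ, 1 ≤ Q (n - i) ∧ Q (n - i) ≤ n - 1)
    (hlim : Tendsto (fun n : ℕ => (Q n : ℝ) / n) atTop (nhds L))
    (hL0 : 0 < L) (hL1 : L < 1) :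
    L = ((ℓ : ℝ) - 1) / ℓ := by
  have key : ∀ i ∈ Finset.Icc 1 ℓ,
      Tendsto (fun n : ℕ => (Q (n - Q (n - i)) : ℝ) / n) atTop (nhds (L * (1 - L))) := by
    intro i hi
    obtain ⟨hi1, hiℓ⟩ := Finset.mem_Icc.mp hi
    -- Step 1: Q(n-i)/n → L
    have hni : Tendsto (fun n : ℕ => n - i) atTop atTop := tendsto_sub_atTop_nat i
    have hc : Tendsto (fun n : ℕ => (Q (n - i) : ℝ) / ((n - i : ℕ) : ℝ)) atTop (nhds L) :=
      hlim.comp hni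
    have hr : Tendsto (fun n : ℕ => ((n - i : ℕ) : ℝ) / n) atTop (nhds 1) := by
      have h0 : Tendsto (fun n : ℕ => 1 - (i : ℝ) / n) atTop (nhds 1) := by
        have := tendsto_one_div_atTop_nhds_zero_nat.const_mul (i : ℝ)
        simpa [div_eq_mul_inv] using (tendsto_const_nhds.sub (by simpa [div_eq_mul_inv] using this) :
          Tendsto (fun n : ℕ => 1 - (i : ℝ) * (1 / n)) atTop (nhds (1 - 0)))
      refine h0.congr' ?_
      filter_upwards [eventually_ge_atTop (i + 1)] with n hn
      have hn0 : (n : ℝ) ≠ 0 := Nat.cast_ne_zero.mpr (by omega)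
      rw [Nat.cast_sub (by omega)]
      field_simp
    have h1 : Tendsto (fun n : ℕ => (Q (n - i) : ℝ) / n) atTop (nhds L) := by
      have := hc.mul hr
      rw [mul_one] at this
      refine this.congr' ?_
      filter_upwards [eventually_ge_atTop (i + 1)] with n hn
      have hn0 : (n : ℝ) ≠ 0 := Nat.cast_ne_zero.mpr (by omega)
      have hni0 : ((n - i : ℕ) : ℝ) ≠ 0 := by
        have : 0 < n - i := by omega
        positivity
      field_simp
    -- Step 2: (n - Q(n-i))/n → 1 - L
    have h2 : Tendsto (fun n : ℕ => ((n - Q (n - i) : ℕ) : ℝ) / n) atTop (nhds (1 - L)) := by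
      have := (tendsto_const_nhds (x := (1 : ℝ))).sub h1
      refine this.congr' ?_
      filter_upwards [eventually_ge_atTop (N + i + 1)] with n hn
      have hN : N ≤ n := by omega
      have hQ := (hargs n hN i hi).2
      have hn0 : (n : ℝ) ≠ 0 := Nat.cast_ne_zero.mpr (by omega)
      rw [Nat.cast_sub (by omega)]
      field_simp
    -- Step 3: n - Q(n-i) → ∞
    have h3 : Tendsto (fun n : ℕ => n - Q (n - i)) atTop atTop := by
      rw [← tendsto_natCast_atTop_iff (R := ℝ)]
      have hmul : Tendsto (fun n : ℕ => (((n - Q (n - i) : ℕ) : ℝ) / n) * n) atTop atTop :=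
        Tendsto.pos_mul_atTop (by linarith) h2 tendsto_natCast_atTop_atTop
      refine hmul.congr' ?_
      filter_upwards [eventually_ge_atTop 1] with n hn
      have hn0 : (n : ℝ) ≠ 0 := by
        have : 0 < n := hn
        positivity
      field_simp
    -- Step 4: Q(n - Q(n-i)) / (n - Q(n-i)) → L
    have h4 : Tendsto (fun n : ℕ => (Q (n - Q (n - i)) : ℝ) / ((n - Q (n - i) : ℕ) : ℝ))
        atTop (nhds L) := hlim.comp h3
    have := h4.mul h2
    refine this.congr' ?_
    filter_upwards [h3.eventually_ge_atTop 1, eventually_ge_atTop 1] with n hf hn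
    have hn0 : (n : ℝ) ≠ 0 := by
      have : 0 < n := hn
      positivity
    have hf0 : ((n - Q (n - i) : ℕ) : ℝ) ≠ 0 := by
      have : 0 < n - Q (n - i) := hf
      positivity
    field_simp
  -- Sum of the limits
  have hsum : Tendsto (fun n : ℕ => ∑ i ∈ Finset.Icc 1 ℓ, (Q (n - Q (n - i)) : ℝ) / n)
      atTop (nhds (∑ _i ∈ Finset.Icc 1 ℓ, L * (1 - L))) :=
    tendsto_finset_sum _ key
  have hcard : (∑ _i ∈ Finset.Icc 1 ℓ, L * (1 - L)) = (ℓ : ℝ) * (L * (1 - L)) := by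
    rw [Finset.sum_const, Nat.card_Icc]
    simp [nsmul_eq_mul]
  rw [hcard] at hsum
  have heq : Tendsto (fun n : ℕ => (Q n : ℝ) / n) atTop (nhds ((ℓ : ℝ) * (L * (1 - L)))) := by
    refine hsum.congr' ?_
    filter_upwards [eventually_ge_atTop N] with n hn
    rw [hrec n hn]
    push_cast
    rw [Finset.sum_div]
  have hLeq : L = (ℓ : ℝ) * (L * (1 - L)) := tendsto_nhds_unique hlim heq
  have hℓ0 : (ℓ : ℝ) ≠ 0 := by
    have : (2 : ℝ) ≤ (ℓ : ℝ) := by exact_mod_cast hℓ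
    linarith
  have h1 : 1 = (ℓ : ℝ) * (1 - L) := by
    have h := hLeq
    have := mul_left_cancel₀ (ne_of_gt hL0) (by linarith [hLeq] : L * 1 = L * ((ℓ : ℝ) * (1 - L)))
    linarith
  field_simp
  nlinarith [h1]
end

section
/- The Hofstadter–Conway sequence defined by c(1)=c(2)=1 and c(n)=c(c(n-1))+c(n-c(n-1)) for n≥3 satisfies 1 ≤ c(n) ≤ n for all n ≥ 1, c(n+1)−c(n) ∈ {0,1} for all n ≥ 1, and c(2^k) = 2^{k-1} for k = 1, 2, 3, 4. -/
/-- The Hofstadter–Conway sequence: 1 ≤ c(n) ≤ n, successive differences 0 or 1,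
and c(2^k) = 2^(k-1) for k = 1,2,3,4. -/
theorem conway_properties (c : ℕ → ℕ)
    (h1 : c 1 = 1) (h2 : c 2 = 1)
    (hrec : ∀ n, 3 ≤ n → c n = c (c (n - 1)) + c (n - c (n - 1))) :
    (∀ n, 1 ≤ n → 1 ≤ c n ∧ c n ≤ n) ∧
    (∀ n, 1 ≤ n → c (n + 1) = c n ∨ c (n + 1) = c n + 1) ∧
    (c 2 = 1 ∧ c 4 = 2 ∧ c 8 = 4 ∧ c 16 = 8) := by
  have hc3 : c 3 = 2 := by
    have h := hrec 3 (by norm_num)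
    norm_num [h2, h1] at h
    omega
  have key : ∀ n, 1 ≤ n →
      (1 ≤ c n ∧ c n ≤ n) ∧ (c (n + 1) = c n ∨ c (n + 1) = c n + 1) := by
    intro n
    induction n using Nat.strong_induction_on with
    | _ n ih =>
      intro hn
      match n, hn with
      | 1, _ =>
        refine ⟨⟨by omega, by omega⟩, Or.inl (by rw [h1, h2])⟩
      | 2, _ =>
        refine ⟨⟨by omega, by omega⟩, Or.inr (by rw [h2]; norm_num [hc3])⟩
      | (m + 3), _ =>
        set n := m + 3 with hndef
        have hprev := ih (n - 1) (by omega) (by omega)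
        obtain ⟨⟨hk1, hk2⟩, hd⟩ := hprev
        rw [show n - 1 + 1 = n from by omega] at hd
        set k := c (n - 1) with hkdef
        have hk2' : k ≤ n - 1 := hk2.trans (by omega)
        have hPk := (ih k (by omega) hk1).1
        have hPnk := (ih (n - k) (by omega) (by omega)).1
        have hrn : c n = c k + c (n - k) := hrec n (by omega)
        have hP : 1 ≤ c n ∧ c n ≤ n := by
          constructor
          · omega
          · have : c k ≤ k := hPk.2
            have : c (n - k) ≤ n - k := hPnk.2
            omega
        refine ⟨hP, ?_⟩
        have hrn1 : c (n + 1) = c (c n) + c (n + 1 - c n) := by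
          have := hrec (n + 1) (by omega)
          simpa using this
        rcases hd with hd | hd
        · -- c n = k
          rw [hd] at hrn1
          have hnk1 : n + 1 - k = (n - k) + 1 := by omega
          rw [hnk1] at hrn1
          have hdnk := (ih (n - k) (by omega) (by omega)).2
          rcases hdnk with h' | h' <;> rw [h'] at hrn1 <;> omega
        · -- c n = k + 1
          rw [hd] at hrn1
          have hnk1 : n + 1 - (k + 1) = n - k := by omega
          rw [hnk1] at hrn1
          have hdk := (ih k (by omega) hk1).2
          rcases hdk with h' | h' <;> rw [h'] at hrn1 <;> omega
  have hc4 : c 4 = 2 := by have h := hrec 4 (by norm_num); norm_num [hc3, h2] at h; omega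
  have hc5 : c 5 = 3 := by have h := hrec 5 (by norm_num); norm_num [hc4, h2, hc3] at h; omega
  have hc6 : c 6 = 4 := by have h := hrec 6 (by norm_num); norm_num [hc5, hc3] at h; omega
  have hc7 : c 7 = 4 := by have h := hrec 7 (by norm_num); norm_num [hc6, hc4, hc3] at h; omega
  have hc8 : c 8 = 4 := by have h := hrec 8 (by norm_num); norm_num [hc7, hc4] at h; omega
  have hc9 : c 9 = 5 := by have h := hrec 9 (by norm_num); norm_num [hc8, hc4, hc5] at h; omega
  have hc10 : c 10 = 6 := by have h := hrec 10 (by norm_num); norm_num [hc9, hc5] at h; omega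
  have hc11 : c 11 = 7 := by have h := hrec 11 (by norm_num); norm_num [hc10, hc6, hc5] at h; omega
  have hc12 : c 12 = 7 := by have h := hrec 12 (by norm_num); norm_num [hc11, hc7, hc5] at h; omega
  have hc13 : c 13 = 8 := by have h := hrec 13 (by norm_num); norm_num [hc12, hc7, hc6] at h; omega
  have hc14 : c 14 = 8 := by have h := hrec 14 (by norm_num); norm_num [hc13, hc8, hc6] at h; omega
  have hc15 : c 15 = 8 := by have h := hrec 15 (by norm_num); norm_num [hc14, hc8, hc7] at h; omega
  have hc16 : c 16 = 8 := by have h := hrec 16 (by norm_num); norm_num [hc15, hc8] at h; omega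
  exact ⟨fun n hn => (key n hn).1, fun n hn => (key n hn).2, h2, hc4, hc8, hc16⟩
end
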